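/- Let f : ℝ^d → ℝ be convex and L-smooth (differentiable with L-Lipschitz gradient, L > 0), bounded below with f* := inf f. Let w_0 ∈ ℝ^d and define gradient-descent iterates w_{τ+1} = w_τ − η ∇f(w_τ) with step size 0 < η ≤ 1/L. Let E be a positive integer and u := Σ_{τ=0}^{E−1} ∇f(w_τ). Then for every w* ∈ ℝ^d, with Δ := f(w*) − f*, it holds that −2 η ⟨u, w_0 − w*⟩ + η² ‖u‖² ≤ −η E (2 − 2ηLE − 4η²L²E²)·(f(w_0) − f(w*)) + (2η²LE² + 4η³L²E³)·Δ. -/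

import Mathlib

open scoped RealInnerProductSpace

variable {d : ℕ}

private lemma dir_hasDerivAt (f : EuclideanSpace ℝ (Fin d) → ℝ)
    (hdiff : Differentiable ℝ f) (x v : EuclideanSpace ℝ (Fin d)) (t : ℝ) :
    HasDerivAt (fun s : ℝ => f (x + s • v)) ⟪gradient f (x + t • v), v⟫ t := by
  have hf : HasFDerivAt f
      (InnerProductSpace.toDual ℝ _ (gradient f (x + t • v))) (x + t • v) :=
    hasGradientAt_iff_hasFDerivAt.mp (hdiff (x + t • v)).hasGradientAt
  have hg : HasDerivAt (fun s : ℝ => x + s • v) v t := by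
    simpa using ((hasDerivAt_id t).smul_const v).const_add x
  have h := hf.comp_hasDerivAt t hg
  simp only [InnerProductSpace.toDual_apply_apply] at h
  exact h

private lemma grad_ineq (f : EuclideanSpace ℝ (Fin d) → ℝ)
    (hconv : ConvexOn ℝ Set.univ f) (hdiff : Differentiable ℝ f)
    (x y : EuclideanSpace ℝ (Fin d)) :
    f x + ⟪gradient f x, y - x⟫ ≤ f y := by
  set φ : ℝ → ℝ := fun t => f (x + t • (y - x)) with hφ
  have hconvφ : ConvexOn ℝ Set.univ φ := by
    have h := hconv.comp_affineMap (AffineMap.lineMap x y)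
    have heq : φ = f ∘ (AffineMap.lineMap x y) := by
      funext t
      simp [hφ, AffineMap.lineMap_apply, add_comm, vsub_eq_sub, vadd_eq_add]
    rw [heq]
    simpa using h
  have hd : HasDerivAt φ ⟪gradient f x, y - x⟫ 0 := by
    have := dir_hasDerivAt f hdiff x (y - x) 0
    simpa using this
  have hs := hconvφ.le_slope_of_hasDerivAt (Set.mem_univ (0:ℝ)) (Set.mem_univ (1:ℝ))
    zero_lt_one hd
  have h0 : φ 0 = f x := by simp [hφ]
  have h1 : φ 1 = f y := by simp [hφ]
  rw [slope_def_field, h0, h1, show (1:ℝ) - 0 = 1 by norm_num, div_one] at hs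
  linarith

private lemma descent_lemma (f : EuclideanSpace ℝ (Fin d) → ℝ) (L : ℝ) (hL : 0 < L)
    (hdiff : Differentiable ℝ f)
    (hlip : ∀ x y, ‖gradient f x - gradient f y‖ ≤ L * ‖x - y‖)
    (x y : EuclideanSpace ℝ (Fin d)) :
    f y ≤ f x + ⟪gradient f x, y - x⟫ + L / 2 * ‖y - x‖ ^ 2 := by
  set v := y - x with hv
  set g0 : ℝ := ⟪gradient f x, v⟫ with hg0
  set ψ : ℝ → ℝ := fun t => f (x + t • v) - t * g0 - (L * ‖v‖ ^ 2) * t ^ 2 / 2 with hψ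
  have hψd : ∀ t : ℝ, HasDerivAt ψ (⟪gradient f (x + t • v), v⟫ - g0 - (L * ‖v‖ ^ 2) * t) t := by
    intro t
    have h1 := dir_hasDerivAt f hdiff x v t
    have h2 : HasDerivAt (fun s : ℝ => s * g0) g0 t := by
      simpa using (hasDerivAt_id t).mul_const g0
    have h3 : HasDerivAt (fun s : ℝ => (L * ‖v‖ ^ 2) * s ^ 2 / 2) ((L * ‖v‖ ^ 2) * t) t := by
      have := ((hasDerivAt_pow 2 t).const_mul (L * ‖v‖ ^ 2)).div_const 2
      refine this.congr_deriv ?_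
      norm_num
      ring
    exact (h1.sub h2).sub h3
  have hdiffψ : Differentiable ℝ ψ := fun t => (hψd t).differentiableAt
  have hanti : AntitoneOn ψ (Set.Icc 0 1) := by
    apply antitoneOn_of_deriv_nonpos (convex_Icc 0 1) hdiffψ.continuous.continuousOn
      hdiffψ.differentiableOn
    intro t ht
    rw [interior_Icc] at ht
    rw [(hψd t).deriv]
    have hlips := hlip (x + t • v) x
    have hnorm : ‖(x + t • v) - x‖ = t * ‖v‖ := by
      rw [add_sub_cancel_left, norm_smul, Real.norm_eq_abs, abs_of_pos ht.1]
    have hinner : ⟪gradient f (x + t • v) - gradient f x, v⟫ ≤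
        ‖gradient f (x + t • v) - gradient f x‖ * ‖v‖ := real_inner_le_norm _ _
    have hsub : ⟪gradient f (x + t • v) - gradient f x, v⟫ =
        ⟪gradient f (x + t • v), v⟫ - g0 := by
      rw [inner_sub_left, hg0]
    rw [hnorm] at hlips
    have hk := mul_le_mul_of_nonneg_right hlips (norm_nonneg v)
    nlinarith [norm_nonneg v, hk, hinner, hsub]
  have h01 := hanti (Set.left_mem_Icc.mpr zero_le_one) (Set.right_mem_Icc.mpr zero_le_one)
    zero_le_one
  have hψ0 : ψ 0 = f x := by simp [hψ]
  have hψ1 : ψ 1 = f y - g0 - (L * ‖v‖ ^ 2) / 2 := by simp [hψ, hv]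
  rw [hψ0, hψ1] at h01
  rw [hg0] at h01
  linarith

private lemma sum_range_cast (n : ℕ) :
    (∑ τ ∈ Finset.range n, (τ : ℝ)) = n * (n - 1) / 2 := by
  induction n with
  | zero => simp
  | succ m ih =>
    rw [Finset.sum_range_succ, ih]
    push_cast
    ring

set_option maxHeartbeats 1000000 in
/-- Case 2 (equation pf-july15-16) in the proof of Theorem B.1: bound on the
unclipped-update term. -/
theorem stmt_11 {d : ℕ} (f : EuclideanSpace ℝ (Fin d) → ℝ) (L : ℝ) (hL : 0 < L)
    (hconv : ConvexOn ℝ Set.univ f)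
    (hdiff : Differentiable ℝ f)
    (hlip : ∀ x y, ‖gradient f x - gradient f y‖ ≤ L * ‖x - y‖)
    (fstar : ℝ) (hfstar : IsGLB (Set.range f) fstar)
    (η : ℝ) (hη0 : 0 < η) (hη : η ≤ 1 / L)
    (w : ℕ → EuclideanSpace ℝ (Fin d))
    (hw : ∀ τ, w (τ + 1) = w τ - η • gradient f (w τ))
    (E : ℕ) (hE : 0 < E)
    (u : EuclideanSpace ℝ (Fin d))
    (hu : u = ∑ τ ∈ Finset.range E, gradient f (w τ))
    (wstar : EuclideanSpace ℝ (Fin d))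
    (Δ : ℝ) (hΔ : Δ = f wstar - fstar) :
    -2 * η * ⟪u, w 0 - wstar⟫ + η ^ 2 * ‖u‖ ^ 2 ≤
      -(η * (E : ℝ)) * (2 - 2 * η * L * (E : ℝ) - 4 * η ^ 2 * L ^ 2 * (E : ℝ) ^ 2)
          * (f (w 0) - f wstar)
        + (2 * η ^ 2 * L * (E : ℝ) ^ 2 + 4 * η ^ 3 * L ^ 2 * (E : ℝ) ^ 3) * Δ := by
  subst hΔ
  have hlow : ∀ x, fstar ≤ f x := fun x => hfstar.1 ⟨x, rfl⟩
  have hηL : η * L ≤ 1 := by rwa [le_div_iff₀ hL] at hη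
  have hD : 0 ≤ f (w 0) - fstar := by linarith [hlow (w 0)]
  have hE1 : (1 : ℝ) ≤ (E : ℝ) := by exact_mod_cast hE
  -- inner/norm helpers
  have hinner_neg : ∀ (c : ℝ) (b : EuclideanSpace ℝ (Fin d)),
      ⟪b, -(c • b)⟫ = -(c * ‖b‖ ^ 2) := by
    intro c b
    rw [inner_neg_right, real_inner_smul_right, real_inner_self_eq_norm_sq]
  have hnorm_smul : ∀ (c : ℝ) (b : EuclideanSpace ℝ (Fin d)),
      ‖-(c • b)‖ ^ 2 = c ^ 2 * ‖b‖ ^ 2 := by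
    intro c b
    rw [norm_neg, norm_smul, Real.norm_eq_abs, mul_pow, sq_abs]
  -- K4 : gradient norm bound
  have hg2 : ∀ x, ‖gradient f x‖ ^ 2 ≤ 2 * L * (f x - fstar) := by
    intro x
    have h := descent_lemma f L hL hdiff hlip x (x - L⁻¹ • gradient f x)
    have h2 := hlow (x - L⁻¹ • gradient f x)
    rw [sub_sub_cancel_left, hinner_neg, hnorm_smul] at h
    have h3 : fstar ≤ f x - L⁻¹ * ‖gradient f x‖ ^ 2 / 2 := by
      have he : L / 2 * (L⁻¹ ^ 2 * ‖gradient f x‖ ^ 2)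
          = L⁻¹ * ‖gradient f x‖ ^ 2 / 2 := by
        field_simp
      rw [he] at h
      linarith
    calc ‖gradient f x‖ ^ 2 = 2 * L * (L⁻¹ * ‖gradient f x‖ ^ 2 / 2) := by
          field_simp
      _ ≤ 2 * L * (f x - fstar) := by
          apply mul_le_mul_of_nonneg_left (by linarith) (by positivity)
  -- K5 : descent
  have hmono : ∀ τ, f (w (τ + 1)) ≤ f (w τ) := by
    intro τ
    have h := descent_lemma f L hL hdiff hlip (w τ) (w (τ + 1))
    rw [hw τ, sub_sub_cancel_left, hinner_neg, hnorm_smul] at h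
    rw [hw τ]
    have hc : 0 ≤ η - L * η ^ 2 / 2 := by nlinarith
    nlinarith [sq_nonneg ‖gradient f (w τ)‖, mul_nonneg hc (sq_nonneg ‖gradient f (w τ)‖)]
  have hle0 : ∀ τ, f (w τ) ≤ f (w 0) := by
    intro τ
    induction τ with
    | zero => exact le_refl _
    | succ n ih => exact (hmono n).trans ih
  -- K6
  have hK6 : ∀ τ : ℕ, f (w 0) - f (w τ) ≤ (τ : ℝ) * (2 * η * L * (f (w 0) - fstar)) := by
    intro τ
    induction τ with
    | zero => simp
    | succ n ih =>
      have hgi := grad_ineq f hconv hdiff (w n) (w (n + 1))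
      rw [hw n, sub_sub_cancel_left, hinner_neg] at hgi
      have hdec : f (w n) - f (w (n + 1)) ≤ η * ‖gradient f (w n)‖ ^ 2 := by
        rw [hw n]; linarith
      have hb : η * ‖gradient f (w n)‖ ^ 2 ≤ 2 * η * L * (f (w 0) - fstar) := by
        have h1 : ‖gradient f (w n)‖ ^ 2 ≤ 2 * L * (f (w 0) - fstar) := by
          have := hg2 (w n)
          have := hle0 n
          nlinarith
        nlinarith
      push_cast
      linarith
  -- iterate formula
  have hwf : ∀ τ : ℕ, w τ = w 0 - η • ∑ s ∈ Finset.range τ, gradient f (w s) := by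
    intro τ
    induction τ with
    | zero => simp
    | succ n ih =>
      rw [hw n, Finset.sum_range_succ, smul_add, ← sub_sub, ← ih]
  -- expansion
  have hexp : ∀ a b : EuclideanSpace ℝ (Fin d),
      ‖a - η • b‖ ^ 2 = ‖a‖ ^ 2 - 2 * η * ⟪b, a⟫ + η ^ 2 * ‖b‖ ^ 2 := by
    intro a b
    rw [norm_sub_sq_real, real_inner_smul_right, real_inner_comm, norm_smul,
      Real.norm_eq_abs, mul_pow, sq_abs]
    ring
  set T : ℕ → ℝ := fun τ => ‖w τ - wstar‖ ^ 2 with hT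
  have hTE : -2 * η * ⟪u, w 0 - wstar⟫ + η ^ 2 * ‖u‖ ^ 2 = T E - T 0 := by
    have he : w E - wstar = (w 0 - wstar) - η • u := by
      rw [hwf E, hu]; abel
    simp only [hT]
    rw [he, hexp]
    ring
  have hstep : ∀ τ, T (τ + 1) - T τ
      = -2 * η * ⟪gradient f (w τ), w τ - wstar⟫ + η ^ 2 * ‖gradient f (w τ)‖ ^ 2 := by
    intro τ
    have he : w (τ + 1) - wstar = (w τ - wstar) - η • gradient f (w τ) := by
      rw [hw τ]; abel
    simp only [hT]
    rw [he, hexp]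
    ring
  have htel : T E - T 0 = ∑ τ ∈ Finset.range E, (T (τ + 1) - T τ) :=
    (Finset.sum_range_sub T E).symm
  -- per-step bound
  have hbnd : ∀ τ ∈ Finset.range E, T (τ + 1) - T τ ≤
      ((-2 * η + 2 * η ^ 2 * L) * f (w 0) + 2 * η * f wstar - 2 * η ^ 2 * L * fstar)
        + (2 * η - 2 * η ^ 2 * L) * (2 * η * L * (f (w 0) - fstar)) * (τ : ℝ) := by
    intro τ _
    rw [hstep τ]
    have h1 : f (w τ) - f wstar ≤ ⟪gradient f (w τ), w τ - wstar⟫ := by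
      have hgi := grad_ineq f hconv hdiff (w τ) wstar
      rw [show wstar - w τ = -(w τ - wstar) by abel, inner_neg_right] at hgi
      linarith
    have h2 := hg2 (w τ)
    have h3 := hK6 τ
    have hc1 : 0 ≤ 2 * η - 2 * η ^ 2 * L := by nlinarith
    have s1 : η * (f (w τ) - f wstar) ≤ η * ⟪gradient f (w τ), w τ - wstar⟫ :=
      mul_le_mul_of_nonneg_left h1 hη0.le
    have s2 : η ^ 2 * ‖gradient f (w τ)‖ ^ 2 ≤ η ^ 2 * (2 * L * (f (w τ) - fstar)) :=
      mul_le_mul_of_nonneg_left h2 (sq_nonneg η)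
    have s3 : (2 * η - 2 * η ^ 2 * L) * (f (w 0) - (τ : ℝ) * (2 * η * L * (f (w 0) - fstar)))
        ≤ (2 * η - 2 * η ^ 2 * L) * f (w τ) :=
      mul_le_mul_of_nonneg_left (by linarith) hc1
    linarith [s1, s2, s3]
  have hsum := Finset.sum_le_sum hbnd
  have hSb : ∑ τ ∈ Finset.range E,
      (((-2 * η + 2 * η ^ 2 * L) * f (w 0) + 2 * η * f wstar - 2 * η ^ 2 * L * fstar)
        + (2 * η - 2 * η ^ 2 * L) * (2 * η * L * (f (w 0) - fstar)) * (τ : ℝ))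
      = (E : ℝ) * ((-2 * η + 2 * η ^ 2 * L) * f (w 0) + 2 * η * f wstar
          - 2 * η ^ 2 * L * fstar)
        + (2 * η - 2 * η ^ 2 * L) * (2 * η * L * (f (w 0) - fstar))
          * ((E : ℝ) * ((E : ℝ) - 1) / 2) := by
    rw [Finset.sum_add_distrib, Finset.sum_const, Finset.card_range, ← Finset.mul_sum,
      sum_range_cast, nsmul_eq_mul]
  rw [hTE, htel]
  refine le_trans (le_trans hsum (le_of_eq hSb)) ?_
  have p1 : 0 ≤ η ^ 3 * L ^ 2 * (E : ℝ) * ((E : ℝ) - 1) * (f (w 0) - fstar) :=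
    mul_nonneg (mul_nonneg (by positivity) (by linarith)) hD
  have p2 : 0 ≤ η ^ 3 * L ^ 2 * (E : ℝ) ^ 3 * (f (w 0) - fstar) :=
    mul_nonneg (by positivity) hD
  have hkey : -(η * (E : ℝ)) * (2 - 2 * η * L * (E : ℝ) - 4 * η ^ 2 * L ^ 2 * (E : ℝ) ^ 2)
          * (f (w 0) - f wstar)
        + (2 * η ^ 2 * L * (E : ℝ) ^ 2 + 4 * η ^ 3 * L ^ 2 * (E : ℝ) ^ 3) * (f wstar - fstar)
      = ((E : ℝ) * ((-2 * η + 2 * η ^ 2 * L) * f (w 0) + 2 * η * f wstar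
          - 2 * η ^ 2 * L * fstar)
        + (2 * η - 2 * η ^ 2 * L) * (2 * η * L * (f (w 0) - fstar))
          * ((E : ℝ) * ((E : ℝ) - 1) / 2))
        + 2 * (η ^ 3 * L ^ 2 * (E : ℝ) * ((E : ℝ) - 1) * (f (w 0) - fstar))
        + 4 * (η ^ 3 * L ^ 2 * (E : ℝ) ^ 3 * (f (w 0) - fstar)) := by
    ring
  rw [hkey]
  linarith [p1, p2]
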